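/- Let m ≥ 4 and let s = (s_{ij})_{(i,j)∈S_m} be any vector of positive real weights. Consider the m−3 rational critical equations of the scattering potential L(x) = Σ_{(i,j)∈S_m} s_{ij}·log q_{ij}(x), namely Σ_{(i,j)∈S_m} s_{ij}·(∂q_{ij}/∂x_k)(x)/q_{ij}(x) = 0 for k = 1,…,m−3, on the set of x ∈ ℂ^{m−3} with q_{ij}(x) ≠ 0 for all (i,j) ∈ S_m. Then this system has precisely (m−3)! solutions; every solution lies in ℝ^{m−3}; and for each permutation π of {1,…,m−3} there is exactly one solution satisfying 0 < x_{π(1)} < x_{π(2)} < ⋯ < x_{π(m−3)} < 1. -/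

import Mathlib

open scoped BigOperators

noncomputable section

/-- The columns of the normalized `2 × m` matrix parametrizing `M_{0,m}`:
`c_1 = (0,-1)`, `c_2 = (1,0)`, `c_j = (1, x_{j-2})` for `3 ≤ j ≤ m-1`, `c_m = (1,1)`. -/
def chyCol (m : ℕ) (x : Fin (m - 3) → ℂ) (j : ℕ) : ℂ × ℂ :=
  if j = 1 then (0, -1)
  else if j = 2 then (1, 0)
  else if j = m then (1, 1)
  else (1, if h : j - 3 < m - 3 then x ⟨j - 3, h⟩ else 0)

/-- The `2 × 2` minor `q_{ij}(x) = det(c_i, c_j)`. -/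
def chyQ (m : ℕ) (i j : ℕ) (x : Fin (m - 3) → ℂ) : ℂ :=
  (chyCol m x i).1 * (chyCol m x j).2 - (chyCol m x i).2 * (chyCol m x j).1

/-- The state set `S_m = {(i,j) : 2 ≤ i < j ≤ m, (i,j) ≠ (2,m)}`. -/
def chyStates (m : ℕ) : Finset (ℕ × ℕ) :=
  ((Finset.Icc 2 m) ×ˢ (Finset.Icc 2 m)).filter fun p => p.1 < p.2 ∧ p ≠ (2, m)

/-- Solutions of the rational critical equations
`∑_{(i,j) ∈ S_m} s_{ij} (∂q_{ij}/∂x_k)(x) / q_{ij}(x) = 0`, `k = 1, …, m-3`,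
on the locus where all `q_{ij}(x) ≠ 0`. -/
def chySol (m : ℕ) (s : ℕ × ℕ → ℝ) : Set (Fin (m - 3) → ℂ) :=
  {x | (∀ p ∈ chyStates m, chyQ m p.1 p.2 x ≠ 0) ∧
    ∀ k : Fin (m - 3),
      ∑ p ∈ chyStates m,
        (s p : ℂ) * fderiv ℂ (chyQ m p.1 p.2) x (Pi.single k 1) / chyQ m p.1 p.2 x = 0}

namespace CHY

/-- generic second coordinate of column `c`. -/
def gV {F : Type*} [Field F] (m : ℕ) (x : Fin (m - 3) → F) (c : ℕ) : F :=
  if c = 2 then 0 else if c = m then 1 else if h : c - 3 < m - 3 then x ⟨c - 3, h⟩ else 0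

/-- derivative of `q_p` with respect to `x_k`. -/
def gD {F : Type*} [Field F] (p : ℕ × ℕ) (k : ℕ) : F :=
  (if p.2 = k + 3 then 1 else 0) - (if p.1 = k + 3 then 1 else 0)

lemma gD_cast {p : ℕ × ℕ} {k : ℕ} : ((gD p k : ℝ) : ℂ) = (gD p k : ℂ) := by
  unfold gD; split_ifs <;> simp

lemma mem_chyStates {m : ℕ} {p : ℕ × ℕ} :
    p ∈ chyStates m ↔ 2 ≤ p.1 ∧ p.1 < p.2 ∧ p.2 ≤ m ∧ ¬(p.1 = 2 ∧ p.2 = m) := by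
  simp only [chyStates, Finset.mem_filter, Finset.mem_product, Finset.mem_Icc, ne_eq,
    Prod.ext_iff, not_and]
  omega

variable {F : Type*} [Field F] {m : ℕ}

@[simp] lemma gV_two (x : Fin (m - 3) → F) : gV m x 2 = 0 := by simp [gV]

lemma gV_m (hm : 4 ≤ m) (x : Fin (m - 3) → F) : gV m x m = 1 := by
  unfold gV; rw [if_neg (by omega), if_pos rfl]

lemma gV_coord (hm : 4 ≤ m) (x : Fin (m - 3) → F) (k : Fin (m - 3)) :
    gV m x ((k : ℕ) + 3) = x k := by
  have hk := k.isLt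
  unfold gV
  rw [if_neg (by omega), if_neg (by omega), dif_pos (by omega)]
  exact congrArg x (Fin.ext (by simp))

lemma gV_cases (hm : 4 ≤ m) {c : ℕ} (h2 : 2 ≤ c) (hcm : c ≤ m) :
    c = 2 ∨ c = m ∨ ∃ k : Fin (m - 3), c = (k : ℕ) + 3 := by
  by_cases hc2 : c = 2
  · exact Or.inl hc2
  by_cases hcm' : c = m
  · exact Or.inr (Or.inl hcm')
  · exact Or.inr (Or.inr ⟨⟨c - 3, by omega⟩, by simp; omega⟩)

lemma chyCol_eq (hm : 4 ≤ m) (x : Fin (m - 3) → ℂ) {c : ℕ} (hc : 2 ≤ c) :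
    chyCol m x c = (1, gV m x c) := by
  unfold chyCol gV
  split_ifs <;> first | rfl | omega

lemma chyQ_eq (hm : 4 ≤ m) {i j : ℕ} (hi : 2 ≤ i) (hj : 2 ≤ j) (x : Fin (m - 3) → ℂ) :
    chyQ m i j x = gV m x j - gV m x i := by
  unfold chyQ
  rw [chyCol_eq hm x hi, chyCol_eq hm x hj]
  ring

lemma fderiv_chyQ (hm : 4 ≤ m) {p : ℕ × ℕ} (hp : p ∈ chyStates m) (x : Fin (m - 3) → ℂ)
    (k : Fin (m - 3)) :
    fderiv ℂ (chyQ m p.1 p.2) x (Pi.single k 1) = (gD p (k : ℕ) : ℂ) := by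
  obtain ⟨h1, h2, h3, h4⟩ := mem_chyStates.mp hp
  rcases gV_cases hm h1 (le_of_lt (lt_of_lt_of_le h2 h3)) with hi2 | him | ⟨a, ha⟩
  · -- p.1 = 2
    rcases gV_cases hm (show 2 ≤ p.2 by omega) h3 with hj2 | hjm | ⟨b, hb⟩
    · omega
    · exact absurd ⟨hi2, hjm⟩ h4
    · have hfun : chyQ m p.1 p.2 = fun z => z b := by
        funext z
        rw [chyQ_eq hm h1 (by omega), hi2, hb, gV_two, gV_coord hm]
        ring
      have hd : HasFDerivAt (fun z : Fin (m - 3) → ℂ => z b)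
          (ContinuousLinearMap.proj (R := ℂ) (φ := fun _ : Fin (m - 3) => ℂ) b) x :=
        hasFDerivAt_apply b x
      rw [hfun, hd.fderiv]
      have hbk := b.isLt
      simp only [ContinuousLinearMap.proj_apply, Pi.single_apply, gD, hi2, hb]
      split_ifs with hA hB hC <;>
        simp_all [Fin.ext_iff] <;> omega
  · omega
  · rcases gV_cases hm (show 2 ≤ p.2 by omega) h3 with hj2 | hjm | ⟨b, hb⟩
    · omega
    · -- p.2 = m
      have hfun : chyQ m p.1 p.2 = fun z => 1 - z a := by
        funext z
        rw [chyQ_eq hm h1 (by omega), ha, hjm, gV_m hm, gV_coord hm]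
      have hd : HasFDerivAt (fun z : Fin (m - 3) → ℂ => 1 - z a)
          (0 - ContinuousLinearMap.proj (R := ℂ) (φ := fun _ : Fin (m - 3) => ℂ) a) x :=
        (hasFDerivAt_const (1 : ℂ) x).sub (hasFDerivAt_apply a x)
      rw [hfun, hd.fderiv]
      have hak := a.isLt
      simp only [ContinuousLinearMap.sub_apply, ContinuousLinearMap.zero_apply,
        ContinuousLinearMap.proj_apply, Pi.single_apply, gD, ha, hjm]
      split_ifs <;> simp_all [Fin.ext_iff] <;> omega
    · have hfun : chyQ m p.1 p.2 = fun z => z b - z a := by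
        funext z
        rw [chyQ_eq hm h1 (by omega), ha, hb, gV_coord hm, gV_coord hm]
      have hd : HasFDerivAt (fun z : Fin (m - 3) → ℂ => z b - z a)
          (ContinuousLinearMap.proj (R := ℂ) (φ := fun _ : Fin (m - 3) => ℂ) b
            - ContinuousLinearMap.proj (R := ℂ) (φ := fun _ : Fin (m - 3) => ℂ) a) x :=
        (hasFDerivAt_apply b x).sub (hasFDerivAt_apply a x)
      rw [hfun, hd.fderiv]
      have hak := a.isLt
      have hbk := b.isLt
      simp only [ContinuousLinearMap.sub_apply, ContinuousLinearMap.proj_apply,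
        Pi.single_apply, gD, ha, hb]
      split_ifs <;> simp_all [Fin.ext_iff] <;> omega

lemma sol_iff (hm : 4 ≤ m) (s : ℕ × ℕ → ℝ) (x : Fin (m - 3) → ℂ) :
    x ∈ chySol m s ↔
      (∀ p ∈ chyStates m, gV m x p.2 - gV m x p.1 ≠ 0) ∧
      ∀ k : Fin (m - 3),
        ∑ p ∈ chyStates m, (s p : ℂ) * (gD p (k : ℕ) : ℂ) /
          (gV m x p.2 - gV m x p.1) = 0 := by
  have hq : ∀ p ∈ chyStates m, chyQ m p.1 p.2 x = gV m x p.2 - gV m x p.1 := by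
    intro p hp
    obtain ⟨h1, h2, h3, h4⟩ := mem_chyStates.mp hp
    exact chyQ_eq hm h1 (by omega) x
  unfold chySol
  simp only [Set.mem_setOf_eq]
  constructor
  · rintro ⟨hnz, heq⟩
    refine ⟨fun p hp => by rw [← hq p hp]; exact hnz p hp, fun k => ?_⟩
    rw [← heq k]
    refine (Finset.sum_congr rfl fun p hp => ?_).symm
    rw [hq p hp, fderiv_chyQ hm hp x k]
  · rintro ⟨hnz, heq⟩
    refine ⟨fun p hp => by rw [hq p hp]; exact hnz p hp, fun k => ?_⟩
    rw [← heq k]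
    refine Finset.sum_congr rfl fun p hp => ?_
    rw [hq p hp, fderiv_chyQ hm hp x k]


lemma reidx (hm : 4 ≤ m) (a : ℕ × ℕ → F) (x : Fin (m - 3) → F) (k : Fin (m - 3)) :
    ∑ p ∈ chyStates m, a p * gD p (k : ℕ) / (gV m x p.2 - gV m x p.1)
      = ∑ c ∈ (Finset.Icc 2 m).erase ((k : ℕ) + 3),
          a (if c < (k : ℕ) + 3 then (c, (k : ℕ) + 3) else ((k : ℕ) + 3, c))
            / (x k - gV m x c) := by
  classical
  have hk := k.isLt
  set K : ℕ := (k : ℕ) + 3 with hKdef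
  have hfil : ∑ p ∈ (chyStates m).filter (fun p => p.1 = K ∨ p.2 = K),
      (fun p => a p * gD p (k : ℕ) / (gV m x p.2 - gV m x p.1)) p
      = ∑ p ∈ chyStates m, a p * gD p (k : ℕ) / (gV m x p.2 - gV m x p.1) :=
    Finset.sum_filter_of_ne (by
      intro p hp hne
      by_contra hcon
      push_neg at hcon
      apply hne
      have : (gD p (k : ℕ) : F) = 0 := by
        unfold gD; rw [if_neg hcon.2, if_neg hcon.1]; ring
      rw [this, mul_zero, zero_div])
  rw [← hfil]
  refine Finset.sum_bij' (i := fun p _ => if p.1 = K then p.2 else p.1)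
    (j := fun c _ => if c < K then (c, K) else (K, c)) ?_ ?_ ?_ ?_ ?_
  · intro p hp
    obtain ⟨hp1, hp2⟩ := Finset.mem_filter.mp hp
    obtain ⟨h1, h2, h3, h4⟩ := mem_chyStates.mp hp1
    rw [Finset.mem_erase, Finset.mem_Icc]
    rcases hp2 with h | h <;> split_ifs <;> omega
  · intro c hc
    rw [Finset.mem_erase, Finset.mem_Icc] at hc
    rw [Finset.mem_filter, mem_chyStates]
    split_ifs with h <;> simp <;> omega
  · intro p hp
    obtain ⟨hp1, hp2⟩ := Finset.mem_filter.mp hp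
    obtain ⟨h1, h2, h3, h4⟩ := mem_chyStates.mp hp1
    by_cases h : p.1 = K
    · rw [if_pos h, if_neg (by omega)]
      exact Prod.ext h.symm rfl
    · have h' : p.2 = K := by tauto
      rw [if_neg h, if_pos (by omega)]
      exact Prod.ext rfl h'.symm
  · intro c hc
    rw [Finset.mem_erase, Finset.mem_Icc] at hc
    split_ifs with h <;> simp <;> omega
  · intro p hp
    obtain ⟨hp1, hp2⟩ := Finset.mem_filter.mp hp
    obtain ⟨h1, h2, h3, h4⟩ := mem_chyStates.mp hp1
    have hgvK : gV m x K = x k := gV_coord hm x k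
    by_cases h : p.1 = K
    · -- p = (K, p.2), gD = -1
      have hp2K : p.2 ≠ K := by omega
      have hgD : (gD p (k : ℕ) : F) = -1 := by
        unfold gD; rw [if_neg hp2K, if_pos h]; ring
      rw [if_pos h, if_neg (by omega), hgD,
        show ((K : ℕ), p.2) = p from Prod.ext h.symm rfl, h, hgvK,
        show gV m x p.2 - x k = -(x k - gV m x p.2) by ring, div_neg]
      ring
    · have h' : p.2 = K := by tauto
      have hgD : (gD p (k : ℕ) : F) = 1 := by
        unfold gD; rw [if_pos h', if_neg h]; ring
      rw [if_neg h, hgD, if_pos (show p.1 < K by omega),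
        show ((p.1 : ℕ), K) = p from Prod.ext rfl h'.symm, h', hgvK, mul_one]


lemma pairK_mem (hm : 4 ≤ m) (k : Fin (m - 3)) {c : ℕ}
    (hc : c ∈ (Finset.Icc 2 m).erase ((k : ℕ) + 3)) :
    (if c < (k : ℕ) + 3 then (c, (k : ℕ) + 3) else ((k : ℕ) + 3, c)) ∈ chyStates m := by
  have hk := k.isLt
  rw [Finset.mem_erase, Finset.mem_Icc] at hc
  split_ifs with h <;> simp [mem_chyStates] <;> omega

lemma denom_ne (hm : 4 ≤ m) (x : Fin (m - 3) → F) (k : Fin (m - 3))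
    (hnz : ∀ p ∈ chyStates m, gV m x p.2 - gV m x p.1 ≠ 0) {c : ℕ}
    (hc : c ∈ (Finset.Icc 2 m).erase ((k : ℕ) + 3)) :
    x k - gV m x c ≠ 0 := by
  have hk := k.isLt
  have hp := pairK_mem hm k hc
  have h := hnz _ hp
  rw [Finset.mem_erase, Finset.mem_Icc] at hc
  split_ifs at h with hlt
  · simpa [gV_coord hm] using h
  · simp only [gV_coord hm] at h
    intro hz
    exact h (by linear_combination -hz)

lemma div_ofReal_im (w : ℝ) (z : ℂ) :
    ((w : ℂ) / z).im = -w * z.im / Complex.normSq z := by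
  simp [div_eq_mul_inv, Complex.mul_im, Complex.inv_im, Complex.inv_re]
  ring

lemma gV_im_le {x : Fin (m - 3) → ℂ} {μ : ℝ} (hm : 4 ≤ m) (hμ : 0 ≤ μ)
    (hmax : ∀ l, (x l).im ≤ μ) {c : ℕ} (h2 : 2 ≤ c) (hcm : c ≤ m) :
    (gV m x c).im ≤ μ := by
  rcases gV_cases hm h2 hcm with rfl | rfl | ⟨l, rfl⟩
  · simpa using hμ
  · rw [gV_m hm]; simpa using hμ
  · rw [gV_coord hm]; exact hmax l

lemma im_nonpos (hm : 4 ≤ m) (s : ℕ × ℕ → ℝ) (hs : ∀ p ∈ chyStates m, 0 < s p)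
    (x : Fin (m - 3) → ℂ) (hx : x ∈ chySol m s) : ∀ k, (x k).im ≤ 0 := by
  obtain ⟨hnz, heq⟩ := (sol_iff hm s x).mp hx
  by_contra hcon
  push_neg at hcon
  obtain ⟨k1, hk1⟩ := hcon
  have hne : (Finset.univ : Finset (Fin (m - 3))).Nonempty := ⟨k1, Finset.mem_univ k1⟩
  obtain ⟨k0, -, hmax⟩ := Finset.exists_max_image Finset.univ (fun k => (x k).im) hne
  have hmax' : ∀ l, (x l).im ≤ (x k0).im := fun l => hmax l (Finset.mem_univ l)
  have hμ : 0 < (x k0).im := lt_of_lt_of_le hk1 (hmax' k1)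
  have hk0 := k0.isLt
  have heq0 := heq k0
  rw [reidx hm (fun p => ((s p : ℝ) : ℂ)) x k0] at heq0
  have him := congrArg Complex.im heq0
  rw [Complex.im_sum, Complex.zero_im] at him
  have hlt : ∑ c ∈ (Finset.Icc 2 m).erase ((k0 : ℕ) + 3),
      (((s (if c < (k0 : ℕ) + 3 then (c, (k0 : ℕ) + 3) else ((k0 : ℕ) + 3, c)) : ℝ) : ℂ)
        / (x k0 - gV m x c)).im < ∑ c ∈ (Finset.Icc 2 m).erase ((k0 : ℕ) + 3), (0 : ℝ) := by
    refine Finset.sum_lt_sum ?_ ?_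
    · intro c hc
      have hzne := denom_ne hm x k0 hnz hc
      have hsp := hs _ (pairK_mem hm k0 hc)
      rw [Finset.mem_erase, Finset.mem_Icc] at hc
      have hzim : 0 ≤ (x k0 - gV m x c).im := by
        rw [Complex.sub_im]
        have := gV_im_le (x := x) hm (le_of_lt hμ) hmax' hc.2.1 hc.2.2
        linarith
      rw [div_ofReal_im]
      apply div_nonpos_of_nonpos_of_nonneg
      · nlinarith
      · exact le_of_lt (Complex.normSq_pos.mpr hzne)
    · refine ⟨2, ?_, ?_⟩
      · rw [Finset.mem_erase, Finset.mem_Icc]; omega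
      · have hc2 : (2 : ℕ) ∈ (Finset.Icc 2 m).erase ((k0 : ℕ) + 3) := by
          rw [Finset.mem_erase, Finset.mem_Icc]; omega
        have hzne := denom_ne hm x k0 hnz hc2
        have hsp := hs _ (pairK_mem hm k0 hc2)
        rw [div_ofReal_im]
        apply div_neg_of_neg_of_pos
        · simp only [gV_two, Complex.sub_im, Complex.zero_im]
          nlinarith
        · exact Complex.normSq_pos.mpr hzne
  rw [Finset.sum_const, smul_zero] at hlt
  rw [him] at hlt
  exact lt_irrefl 0 hlt

lemma gV_conj (x : Fin (m - 3) → ℂ) (c : ℕ) :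
    gV m (fun t => (starRingEnd ℂ) (x t)) c = (starRingEnd ℂ) (gV m x c) := by
  unfold gV; split_ifs <;> simp

lemma gD_conj (p : ℕ × ℕ) (k : ℕ) : (starRingEnd ℂ) (gD p k) = gD p k := by
  unfold gD; split_ifs <;> simp

lemma conj_mem (hm : 4 ≤ m) (s : ℕ × ℕ → ℝ) {x : Fin (m - 3) → ℂ} (hx : x ∈ chySol m s) :
    (fun k => (starRingEnd ℂ) (x k)) ∈ chySol m s := by
  obtain ⟨hnz, heq⟩ := (sol_iff hm s x).mp hx
  rw [sol_iff hm]
  constructor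
  · intro p hp
    rw [gV_conj, gV_conj, ← map_sub]
    exact fun h => hnz p hp (by simpa using congrArg (starRingEnd ℂ) h)
  · intro k
    have := congrArg (starRingEnd ℂ) (heq k)
    rw [map_sum, map_zero] at this
    rw [← this]
    refine Finset.sum_congr rfl fun p hp => ?_
    rw [gV_conj, gV_conj, ← map_sub, map_div₀, map_mul, gD_conj, Complex.conj_ofReal]

lemma im_zero (hm : 4 ≤ m) (s : ℕ × ℕ → ℝ) (hs : ∀ p ∈ chyStates m, 0 < s p)
    {x : Fin (m - 3) → ℂ} (hx : x ∈ chySol m s) : ∀ k, (x k).im = 0 := by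
  intro k
  refine le_antisymm (im_nonpos hm s hs x hx k) ?_
  have := im_nonpos hm s hs _ (conj_mem hm s hx) k
  simpa using this


lemma gV_ofReal (y : Fin (m - 3) → ℝ) (c : ℕ) :
    gV m (fun t => ((y t : ℝ) : ℂ)) c = ((gV m y c : ℝ) : ℂ) := by
  unfold gV; split_ifs <;> simp

lemma sol_iff_real (hm : 4 ≤ m) (s : ℕ × ℕ → ℝ) (y : Fin (m - 3) → ℝ) :
    (fun k => ((y k : ℝ) : ℂ)) ∈ chySol m s ↔
      (∀ p ∈ chyStates m, gV m y p.2 - gV m y p.1 ≠ 0) ∧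
      ∀ k : Fin (m - 3),
        ∑ p ∈ chyStates m, s p * gD p (k : ℕ) / (gV m y p.2 - gV m y p.1) = 0 := by
  rw [sol_iff hm]
  have hcast : ∀ p : ℕ × ℕ,
      gV m (fun t => ((y t : ℝ) : ℂ)) p.2 - gV m (fun t => ((y t : ℝ) : ℂ)) p.1
        = (((gV m y p.2 - gV m y p.1 : ℝ)) : ℂ) := by
    intro p; rw [gV_ofReal, gV_ofReal]; push_cast; ring
  have hterm : ∀ (k : ℕ) (p : ℕ × ℕ),
      (s p : ℂ) * (gD p k : ℂ) / (gV m (fun t => ((y t : ℝ) : ℂ)) p.2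
        - gV m (fun t => ((y t : ℝ) : ℂ)) p.1)
      = (((s p * gD p k / (gV m y p.2 - gV m y p.1) : ℝ)) : ℂ) := by
    intro k p
    rw [hcast, ← gD_cast]
    push_cast
    ring
  constructor
  · rintro ⟨h1, h2⟩
    constructor
    · intro p hp
      have := h1 p hp
      rw [hcast] at this
      exact fun h => this (by rw [h]; simp)
    · intro k
      have := h2 k
      rw [Finset.sum_congr rfl (fun p _ => hterm (k : ℕ) p), ← Complex.ofReal_sum] at this
      exact_mod_cast this
  · rintro ⟨h1, h2⟩
    constructor
    · intro p hp
      rw [hcast]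
      exact_mod_cast h1 p hp
    · intro k
      rw [Finset.sum_congr rfl (fun p _ => hterm (k : ℕ) p), ← Complex.ofReal_sum]
      exact_mod_cast h2 k

lemma apply_ne (hm : 4 ≤ m) {y : Fin (m - 3) → ℝ}
    (hnz : ∀ p ∈ chyStates m, gV m y p.2 - gV m y p.1 ≠ 0)
    {a b : Fin (m - 3)} (hab : a ≠ b) : y a ≠ y b := by
  have ha := a.isLt
  have hb := b.isLt
  have key : ∀ u v : Fin (m - 3), (u : ℕ) < (v : ℕ) → y u ≠ y v := by
    intro u v huv
    have hu := u.isLt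
    have hv := v.isLt
    have hmem : ((u : ℕ) + 3, (v : ℕ) + 3) ∈ chyStates m := by
      rw [mem_chyStates]; simp; omega
    have := hnz _ hmem
    simp only [gV_coord hm] at this
    intro h
    exact this (by rw [h]; ring)
  rcases lt_trichotomy (a : ℕ) (b : ℕ) with h | h | h
  · exact key a b h
  · exact absurd (Fin.ext h) hab
  · exact fun hh => key b a h hh.symm

lemma real_sol_Ioo (hm : 4 ≤ m) (s : ℕ × ℕ → ℝ) (hs : ∀ p ∈ chyStates m, 0 < s p)
    (y : Fin (m - 3) → ℝ)
    (hnz : ∀ p ∈ chyStates m, gV m y p.2 - gV m y p.1 ≠ 0)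
    (heq : ∀ k : Fin (m - 3),
      ∑ p ∈ chyStates m, s p * gD p (k : ℕ) / (gV m y p.2 - gV m y p.1) = 0) :
    ∀ k, 0 < y k ∧ y k < 1 := by
  have hlt1 : ∀ k, y k < 1 := by
    by_contra hcon
    push_neg at hcon
    obtain ⟨k1, hk1⟩ := hcon
    obtain ⟨k0, -, hmax⟩ := Finset.exists_max_image Finset.univ y ⟨k1, Finset.mem_univ k1⟩
    have hmax' : ∀ l, y l ≤ y k0 := fun l => hmax l (Finset.mem_univ l)
    have hk0 := k0.isLt
    have hne1 : y k0 ≠ 1 := by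
      have hmem : ((k0 : ℕ) + 3, m) ∈ chyStates m := by
        rw [mem_chyStates]; simp; omega
      have := hnz _ hmem
      simp only [gV_coord hm, gV_m hm] at this
      intro h; exact this (by rw [h]; ring)
    have hgt1 : 1 < y k0 := lt_of_le_of_ne (le_trans hk1 (hmax' k1)) (Ne.symm hne1)
    have heq0 := heq k0
    rw [reidx hm s y k0] at heq0
    have hpos : 0 < ∑ c ∈ (Finset.Icc 2 m).erase ((k0 : ℕ) + 3),
        s (if c < (k0 : ℕ) + 3 then (c, (k0 : ℕ) + 3) else ((k0 : ℕ) + 3, c))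
          / (y k0 - gV m y c) := by
      refine Finset.sum_pos ?_ ⟨2, by rw [Finset.mem_erase, Finset.mem_Icc]; omega⟩
      intro c hc
      have hsp := hs _ (pairK_mem hm k0 hc)
      rw [Finset.mem_erase, Finset.mem_Icc] at hc
      refine div_pos hsp ?_
      rcases gV_cases hm hc.2.1 hc.2.2 with rfl | rfl | ⟨l, rfl⟩
      · simp; linarith
      · rw [gV_m hm]; linarith
      · rw [gV_coord hm]
        have hlne : l ≠ k0 := fun h => hc.1 (by rw [h])
        have := apply_ne hm hnz hlne
        have := hmax' l
        -- y l < y k0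
        cases lt_or_eq_of_le (hmax' l) with
        | inl h => linarith
        | inr h => exact absurd h (apply_ne hm hnz hlne)
    rw [heq0] at hpos
    exact lt_irrefl 0 hpos
  have hgt0 : ∀ k, 0 < y k := by
    by_contra hcon
    push_neg at hcon
    obtain ⟨k1, hk1⟩ := hcon
    obtain ⟨k0, -, hmin⟩ := Finset.exists_min_image Finset.univ y ⟨k1, Finset.mem_univ k1⟩
    have hmin' : ∀ l, y k0 ≤ y l := fun l => hmin l (Finset.mem_univ l)
    have hk0 := k0.isLt
    have hne0 : y k0 ≠ 0 := by
      have hmem : (2, (k0 : ℕ) + 3) ∈ chyStates m := by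
        rw [mem_chyStates]; simp; omega
      have := hnz _ hmem
      simp only [gV_coord hm, gV_two] at this
      intro h; exact this (by rw [h]; ring)
    have hlt0 : y k0 < 0 := lt_of_le_of_ne (le_trans (hmin' k1) hk1) hne0
    have heq0 := heq k0
    rw [reidx hm s y k0] at heq0
    have hneg : (∑ c ∈ (Finset.Icc 2 m).erase ((k0 : ℕ) + 3),
        s (if c < (k0 : ℕ) + 3 then (c, (k0 : ℕ) + 3) else ((k0 : ℕ) + 3, c))
          / (y k0 - gV m y c)) < 0 := by
      refine Finset.sum_neg ?_ ⟨2, by rw [Finset.mem_erase, Finset.mem_Icc]; omega⟩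
      intro c hc
      have hsp := hs _ (pairK_mem hm k0 hc)
      rw [Finset.mem_erase, Finset.mem_Icc] at hc
      refine div_neg_of_pos_of_neg hsp ?_
      rw [sub_neg]
      rcases gV_cases hm hc.2.1 hc.2.2 with rfl | rfl | ⟨l, rfl⟩
      · simpa using hlt0
      · rw [gV_m hm]; linarith
      · rw [gV_coord hm]
        have hlne : l ≠ k0 := fun h => hc.1 (by rw [h])
        cases lt_or_eq_of_le (hmin' l) with
        | inl h => linarith
        | inr h => exact absurd h.symm (apply_ne hm hnz hlne)
    rw [heq0] at hneg
    exact lt_irrefl 0 hneg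
  exact fun k => ⟨hgt0 k, hlt1 k⟩


/-- The open region (chamber) attached to a permutation. -/
def Reg (m : ℕ) (π : Equiv.Perm (Fin (m - 3))) : Set (Fin (m - 3) → ℝ) :=
  {y | (∀ k, 0 < y (π k) ∧ y (π k) < 1) ∧ ∀ k l, k < l → y (π k) < y (π l)}

/-- Compact hull of the chamber. -/
def RegC (m : ℕ) (π : Equiv.Perm (Fin (m - 3))) : Set (Fin (m - 3) → ℝ) :=
  {y | (∀ k, 0 ≤ y k ∧ y k ≤ 1) ∧ ∀ k l : Fin (m - 3), k < l → y (π k) ≤ y (π l)}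

variable {π : Equiv.Perm (Fin (m - 3))}

lemma Reg_pos {y : Fin (m - 3) → ℝ} (hy : y ∈ Reg m π) (t : Fin (m - 3)) :
    0 < y t ∧ y t < 1 := by
  have := hy.1 (π.symm t)
  simpa using this

lemma Reg_inj {y : Fin (m - 3) → ℝ} (hy : y ∈ Reg m π) : Function.Injective y := by
  intro a b hab
  by_contra hne
  rcases lt_trichotomy (π.symm a) (π.symm b) with h | h | h
  · have := hy.2 _ _ h
    simp [hab] at this
  · exact hne (by simpa using congrArg π h)
  · have := hy.2 _ _ h
    simp [hab] at this

lemma Reg_nonvanish (hm : 4 ≤ m) {y : Fin (m - 3) → ℝ} (hy : y ∈ Reg m π) :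
    ∀ p ∈ chyStates m, gV m y p.2 - gV m y p.1 ≠ 0 := by
  intro p hp
  obtain ⟨h1, h2, h3, h4⟩ := mem_chyStates.mp hp
  rcases gV_cases hm h1 (by omega) with hi2 | him | ⟨a, ha⟩
  · rcases gV_cases hm (show 2 ≤ p.2 by omega) h3 with hj2 | hjm | ⟨b, hb⟩
    · omega
    · exact absurd ⟨hi2, hjm⟩ h4
    · rw [hi2, hb, gV_two, gV_coord hm, sub_zero]
      exact ne_of_gt (Reg_pos hy b).1
  · omega
  · rcases gV_cases hm (show 2 ≤ p.2 by omega) h3 with hj2 | hjm | ⟨b, hb⟩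
    · omega
    · rw [ha, hjm, gV_m hm, gV_coord hm]
      have := (Reg_pos hy a).2
      intro h; linarith [sub_eq_zero.mp h]
    · rw [ha, hb, gV_coord hm, gV_coord hm]
      have hab : a ≠ b := by
        intro h; rw [ha, hb, h] at h2; omega
      exact sub_ne_zero_of_ne fun h => hab (Reg_inj hy h).symm

lemma convlt {a b c d t : ℝ} (h1 : a < b) (h2 : c < d) (ht0 : 0 ≤ t) (ht1 : t ≤ 1) :
    a + t * (c - a) < b + t * (d - b) := by
  have key : 0 < (1 - t) * (b - a) + t * (d - c) := by
    rcases lt_or_eq_of_le ht1 with h | h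
    · have h1' : 0 < (1 - t) * (b - a) := mul_pos (by linarith) (by linarith)
      have h2' : 0 ≤ t * (d - c) := mul_nonneg ht0 (by linarith)
      linarith
    · subst h; simp; linarith
  nlinarith [key]

lemma Reg_segment {y z : Fin (m - 3) → ℝ} (hy : y ∈ Reg m π) (hz : z ∈ Reg m π)
    {t : ℝ} (ht0 : 0 ≤ t) (ht1 : t ≤ 1) :
    (fun u => y u + t * (z u - y u)) ∈ Reg m π := by
  constructor
  · intro k
    constructor
    · have := convlt (a := 0) (c := 0) (hy.1 k).1 (hz.1 k).1 ht0 ht1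
      simpa using this
    · have := convlt (b := 1) (d := 1) (hy.1 k).2 (hz.1 k).2 ht0 ht1
      simpa using this
  · intro k l hkl
    exact convlt (hy.2 k l hkl) (hz.2 k l hkl) ht0 ht1

lemma Reg_open : IsOpen (Reg m π) := by
  have h1 : IsOpen {y : Fin (m - 3) → ℝ | ∀ k, 0 < y (π k) ∧ y (π k) < 1} := by
    rw [show {y : Fin (m - 3) → ℝ | ∀ k, 0 < y (π k) ∧ y (π k) < 1}
      = ⋂ k, ({y : Fin (m - 3) → ℝ | 0 < y (π k)} ∩ {y | y (π k) < 1}) by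
        ext y; simp [Set.mem_iInter, forall_and]]
    exact isOpen_iInter_of_finite fun k =>
      (isOpen_lt continuous_const (continuous_apply _)).inter
        (isOpen_lt (continuous_apply _) continuous_const)
  have h2 : IsOpen {y : Fin (m - 3) → ℝ | ∀ k l, k < l → y (π k) < y (π l)} := by
    rw [show {y : Fin (m - 3) → ℝ | ∀ k l, k < l → y (π k) < y (π l)}
      = ⋂ k, ⋂ l, {y : Fin (m - 3) → ℝ | k < l → y (π k) < y (π l)} by
        ext y; simp [Set.mem_iInter]]
    refine isOpen_iInter_of_finite fun k => isOpen_iInter_of_finite fun l => ?_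
    by_cases h : k < l
    · rw [show {y : Fin (m - 3) → ℝ | k < l → y (π k) < y (π l)}
        = {y | y (π k) < y (π l)} by ext y; simp [h]]
      exact isOpen_lt (continuous_apply _) (continuous_apply _)
    · rw [show {y : Fin (m - 3) → ℝ | k < l → y (π k) < y (π l)} = Set.univ by
        ext y; simp [h]]
      exact isOpen_univ
  rw [show Reg m π = {y : Fin (m - 3) → ℝ | ∀ k, 0 < y (π k) ∧ y (π k) < 1}
      ∩ {y | ∀ k l, k < l → y (π k) < y (π l)} by ext y; rfl]
  exact h1.inter h2

lemma RegC_compact : IsCompact (RegC m π) := by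
  have hsub : RegC m π ⊆ Set.pi Set.univ fun _ : Fin (m - 3) => Set.Icc (0 : ℝ) 1 := by
    intro y hy
    rw [Set.mem_pi]
    intro k _
    exact ⟨(hy.1 k).1, (hy.1 k).2⟩
  have hclosed : IsClosed (RegC m π) := by
    have h1 : IsClosed {y : Fin (m - 3) → ℝ | ∀ k, 0 ≤ y k ∧ y k ≤ 1} := by
      rw [show {y : Fin (m - 3) → ℝ | ∀ k, 0 ≤ y k ∧ y k ≤ 1}
        = ⋂ k, ({y : Fin (m - 3) → ℝ | 0 ≤ y k} ∩ {y | y k ≤ 1}) by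
          ext y; simp [Set.mem_iInter, forall_and]]
      exact isClosed_iInter fun k =>
        (isClosed_le continuous_const (continuous_apply _)).inter
          (isClosed_le (continuous_apply _) continuous_const)
    have h2 : IsClosed {y : Fin (m - 3) → ℝ | ∀ k l : Fin (m - 3), k < l → y (π k) ≤ y (π l)} := by
      rw [show {y : Fin (m - 3) → ℝ | ∀ k l : Fin (m - 3), k < l → y (π k) ≤ y (π l)}
        = ⋂ k, ⋂ l, {y : Fin (m - 3) → ℝ | k < l → y (π k) ≤ y (π l)} by
          ext y; simp [Set.mem_iInter]]
      refine isClosed_iInter fun k => isClosed_iInter fun l => ?_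
      by_cases h : k < l
      · rw [show {y : Fin (m - 3) → ℝ | k < l → y (π k) ≤ y (π l)}
          = {y | y (π k) ≤ y (π l)} by ext y; simp [h]]
        exact isClosed_le (continuous_apply _) (continuous_apply _)
      · rw [show {y : Fin (m - 3) → ℝ | k < l → y (π k) ≤ y (π l)} = Set.univ by
          ext y; simp [h]]
        exact isClosed_univ
    rw [show RegC m π = {y : Fin (m - 3) → ℝ | ∀ k, 0 ≤ y k ∧ y k ≤ 1}
        ∩ {y | ∀ k l : Fin (m - 3), k < l → y (π k) ≤ y (π l)} by ext y; rfl]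
    exact h1.inter h2
  exact ((isCompact_univ_pi fun _ => isCompact_Icc).of_isClosed_subset hclosed hsub)

lemma Reg_subset_RegC : Reg m π ⊆ RegC m π := by
  intro y hy
  refine ⟨fun k => ⟨le_of_lt (Reg_pos hy k).1, le_of_lt (Reg_pos hy k).2⟩, ?_⟩
  exact fun k l hkl => le_of_lt (hy.2 k l hkl)

lemma boundary_vanish (hm : 4 ≤ m) {y : Fin (m - 3) → ℝ} (hy : y ∈ RegC m π)
    (hny : y ∉ Reg m π) : ∃ p ∈ chyStates m, gV m y p.2 - gV m y p.1 = 0 := by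
  unfold Reg at hny
  rw [Set.mem_setOf_eq, not_and_or] at hny
  rcases hny with h | h
  · push_neg at h
    obtain ⟨k, hk⟩ := h
    have hk0 := (π k).isLt
    by_cases h0 : y (π k) = 0
    · refine ⟨(2, ((π k) : ℕ) + 3), ?_, ?_⟩
      · rw [mem_chyStates]; simp; omega
      · simp only [gV_coord hm, gV_two, h0]; ring
    · have hpos : 0 < y (π k) := lt_of_le_of_ne (hy.1 (π k)).1 (Ne.symm h0)
      have h1' : y (π k) = 1 := le_antisymm (hy.1 (π k)).2 (hk hpos)
      refine ⟨(((π k) : ℕ) + 3, m), ?_, ?_⟩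
      · rw [mem_chyStates]; simp; omega
      · simp only [gV_coord hm, gV_m hm, h1']; ring
  · push_neg at h
    obtain ⟨k, l, hkl, hle⟩ := h
    have heq : y (π k) = y (π l) := le_antisymm (hy.2 k l hkl) hle
    have hne : π k ≠ π l := fun h => absurd (π.injective h) (ne_of_lt hkl)
    have ha := (π k).isLt
    have hb := (π l).isLt
    rcases lt_trichotomy ((π k : ℕ)) ((π l : ℕ)) with h | h | h
    · refine ⟨((π k : ℕ) + 3, (π l : ℕ) + 3), ?_, ?_⟩
      · rw [mem_chyStates]; simp; omega
      · simp only [gV_coord hm]; rw [heq]; ring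
    · exact absurd (Fin.ext h) hne
    · refine ⟨((π l : ℕ) + 3, (π k : ℕ) + 3), ?_, ?_⟩
      · rw [mem_chyStates]; simp; omega
      · simp only [gV_coord hm]; rw [heq]; ring

lemma Reg_nonempty (hm : 4 ≤ m) : ∃ y, y ∈ Reg m π := by
  refine ⟨fun u => ((π.symm u : ℕ) + 1) / ((m - 3 : ℕ) + 1), ?_, ?_⟩
  · intro k
    have hk := k.isLt
    constructor
    · apply div_pos <;> positivity
    · rw [div_lt_one (by positivity)]
      simp only [Equiv.symm_apply_apply]
      have hr : ((k : ℕ) : ℝ) < ((m - 3 : ℕ) : ℝ) := Nat.cast_lt.mpr hk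
      linarith
  · intro k l hkl
    simp only [Equiv.symm_apply_apply]
    rw [div_lt_div_iff_of_pos_right (by positivity)]
    have : (k : ℕ) < (l : ℕ) := hkl
    have hr : ((k : ℕ) : ℝ) < ((l : ℕ) : ℝ) := Nat.cast_lt.mpr this
    linarith


/-- direction part of `gV` (no constant terms). -/
def gW (m : ℕ) (d : Fin (m - 3) → ℝ) (c : ℕ) : ℝ :=
  if c = 2 then 0 else if c = m then 0 else if h : c - 3 < m - 3 then d ⟨c - 3, h⟩ else 0

lemma gW_coord (hm : 4 ≤ m) (d : Fin (m - 3) → ℝ) (k : Fin (m - 3)) :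
    gW m d ((k : ℕ) + 3) = d k := by
  have hk := k.isLt
  unfold gW
  rw [if_neg (by omega), if_neg (by omega), dif_pos (by omega)]
  exact congrArg d (Fin.ext (by simp))

lemma gV_add_smul (hm : 4 ≤ m) (y d : Fin (m - 3) → ℝ) (t : ℝ) {c : ℕ}
    (h2 : 2 ≤ c) (hcm : c ≤ m) :
    gV m (fun u => y u + t * d u) c = gV m y c + t * gW m d c := by
  rcases gV_cases hm h2 hcm with rfl | rfl | ⟨l, rfl⟩
  · simp [gW]
  · rw [gV_m hm, gV_m hm]
    unfold gW
    rw [if_neg (by omega), if_pos rfl]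
    ring
  · rw [gV_coord hm, gV_coord hm, gW_coord hm]

lemma gW_sub (hm : 4 ≤ m) (y z : Fin (m - 3) → ℝ) {c : ℕ} (h2 : 2 ≤ c) (hcm : c ≤ m) :
    gW m (fun u => z u - y u) c = gV m z c - gV m y c := by
  rcases gV_cases hm h2 hcm with rfl | rfl | ⟨l, rfl⟩
  · simp [gW]
  · rw [gV_m hm, gV_m hm]
    unfold gW
    rw [if_neg (by omega), if_pos rfl]
    ring
  · rw [gV_coord hm, gV_coord hm, gW_coord hm]

lemma gW_eq_sum (hm : 4 ≤ m) (d : Fin (m - 3) → ℝ) {c : ℕ} (h2 : 2 ≤ c) (hcm : c ≤ m) :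
    gW m d c = ∑ k : Fin (m - 3), d k * (if c = (k : ℕ) + 3 then 1 else 0) := by
  rcases gV_cases hm h2 hcm with rfl | hc | ⟨l, rfl⟩
  · rw [show gW m d 2 = 0 by simp [gW]]
    refine (Finset.sum_eq_zero fun k _ => ?_).symm
    rw [if_neg (by omega)]; ring
  · rw [hc, show gW m d m = 0 by unfold gW; rw [if_neg (by omega), if_pos rfl]]
    refine (Finset.sum_eq_zero fun k _ => ?_).symm
    have hk := k.isLt
    rw [if_neg (by omega)]; ring
  · rw [gW_coord hm]
    rw [Finset.sum_eq_single l]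
    · rw [if_pos rfl]; ring
    · intro k _ hkl
      rw [if_neg (fun h => hkl (Fin.ext (by omega)))]; ring
    · intro h; exact absurd (Finset.mem_univ l) h

lemma gW_diff_eq_sum (hm : 4 ≤ m) (d : Fin (m - 3) → ℝ) {p : ℕ × ℕ} (hp : p ∈ chyStates m) :
    gW m d p.2 - gW m d p.1 = ∑ k : Fin (m - 3), d k * gD p (k : ℕ) := by
  obtain ⟨h1, h2, h3, h4⟩ := mem_chyStates.mp hp
  rw [gW_eq_sum hm d (show 2 ≤ p.2 by omega) h3, gW_eq_sum hm d h1 (by omega),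
    ← Finset.sum_sub_distrib]
  refine Finset.sum_congr rfl fun k _ => ?_
  unfold gD
  ring

lemma gV_continuous (c : ℕ) : Continuous fun y : Fin (m - 3) → ℝ => gV m y c := by
  by_cases h2 : c = 2
  · simp only [gV, if_pos h2]
    exact continuous_const
  by_cases hcm : c = m
  · simp only [gV, if_neg h2, if_pos hcm]
    exact continuous_const
  by_cases h3 : c - 3 < m - 3
  · simp only [gV, if_neg h2, if_neg hcm, dif_pos h3]
    exact continuous_apply _
  · simp only [gV, if_neg h2, if_neg hcm, dif_neg h3]
    exact continuous_const

/-- derivative of the log-potential along a segment. -/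
lemma hasDerivAt_psi (s : ℕ × ℕ → ℝ) (A B : ℕ × ℕ → ℝ) (t : ℝ)
    (hnz : ∀ p ∈ chyStates m, A p + t * B p ≠ 0) :
    HasDerivAt (fun t : ℝ => ∑ p ∈ chyStates m, (s p * B p) * (A p + t * B p)⁻¹)
      (∑ p ∈ chyStates m, (s p * B p) * (-(B p) / (A p + t * B p) ^ 2)) t := by
  apply HasDerivAt.fun_sum
  intro p hp
  have haff : HasDerivAt (fun u : ℝ => A p + u * B p) (B p) t := by
    simpa using ((hasDerivAt_id t).mul_const (B p)).const_add (A p)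
  exact (haff.inv (hnz p hp)).const_mul _

lemma hasDerivAt_logsum (hm : 4 ≤ m) (s : ℕ × ℕ → ℝ) (A B : ℕ × ℕ → ℝ) (t : ℝ)
    (hnz : ∀ p ∈ chyStates m, A p + t * B p ≠ 0) :
    HasDerivAt (fun t : ℝ => ∑ p ∈ chyStates m, s p * Real.log (A p + t * B p))
      (∑ p ∈ chyStates m, s p * (B p / (A p + t * B p))) t := by
  apply HasDerivAt.fun_sum
  intro p hp
  have haff : HasDerivAt (fun u : ℝ => A p + u * B p) (B p) t := by
    simpa using ((hasDerivAt_id t).mul_const (B p)).const_add (A p)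
  exact (haff.log (hnz p hp)).const_mul _

lemma exists_sol_in_Reg (hm : 4 ≤ m) (s : ℕ × ℕ → ℝ) (hs : ∀ p ∈ chyStates m, 0 < s p)
    (π : Equiv.Perm (Fin (m - 3))) :
    ∃ y ∈ Reg m π, ∀ k : Fin (m - 3),
      ∑ p ∈ chyStates m, s p * gD p (k : ℕ) / (gV m y p.2 - gV m y p.1) = 0 := by
  classical
  set G : (Fin (m - 3) → ℝ) → ℝ :=
    fun y => ∏ p ∈ chyStates m, |gV m y p.2 - gV m y p.1| ^ (s p) with hGdef
  have hQcont : ∀ p : ℕ × ℕ, Continuous fun y : Fin (m - 3) → ℝ => gV m y p.2 - gV m y p.1 :=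
    fun p => (gV_continuous p.2).sub (gV_continuous p.1)
  have hGcont : Continuous G := by
    apply continuous_finset_prod
    intro p hp
    exact (Real.continuous_rpow_const (le_of_lt (hs p hp))).comp (hQcont p).abs
  obtain ⟨y₁, hy₁⟩ := Reg_nonempty (π := π) hm
  obtain ⟨y₀, hy₀C, hmax⟩ := RegC_compact.exists_isMaxOn ⟨y₁, Reg_subset_RegC hy₁⟩
    hGcont.continuousOn
  have hGpos : ∀ y ∈ Reg m π, 0 < G y := by
    intro y hy
    exact Finset.prod_pos fun p hp =>
      Real.rpow_pos_of_pos (abs_pos.mpr (Reg_nonvanish hm hy p hp)) _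
  have hy₀ : y₀ ∈ Reg m π := by
    by_contra hnot
    obtain ⟨p, hp, hqz⟩ := boundary_vanish hm hy₀C hnot
    have hG0 : G y₀ = 0 := by
      refine Finset.prod_eq_zero hp ?_
      rw [hqz, abs_zero, Real.zero_rpow (ne_of_gt (hs p hp))]
    have := hmax (Reg_subset_RegC hy₁)
    rw [Set.mem_setOf_eq, hG0] at this
    exact absurd this (not_le.mpr (hGpos y₁ hy₁))
  set L : (Fin (m - 3) → ℝ) → ℝ :=
    fun y => ∑ p ∈ chyStates m, s p * Real.log (gV m y p.2 - gV m y p.1) with hLdef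
  have hlog : ∀ y ∈ Reg m π, L y = Real.log (G y) := by
    intro y hy
    rw [hGdef]
    rw [Real.log_prod (fun p hp =>
      ne_of_gt (Real.rpow_pos_of_pos (abs_pos.mpr (Reg_nonvanish hm hy p hp)) _))]
    refine Finset.sum_congr rfl fun p hp => ?_
    rw [Real.log_rpow (abs_pos.mpr (Reg_nonvanish hm hy p hp)), Real.log_abs]
  have hLmax : IsLocalMax L y₀ := by
    filter_upwards [Reg_open.mem_nhds hy₀] with y hy
    rw [hlog y hy, hlog y₀ hy₀]
    exact Real.log_le_log (hGpos y hy) (hmax (Reg_subset_RegC hy))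
  refine ⟨y₀, hy₀, fun k => ?_⟩
  set d : Fin (m - 3) → ℝ := Pi.single k 1 with hddef
  set A : ℕ × ℕ → ℝ := fun p => gV m y₀ p.2 - gV m y₀ p.1 with hAdef
  set B : ℕ × ℕ → ℝ := fun p => gW m d p.2 - gW m d p.1 with hBdef
  have hrw : ∀ t : ℝ, ∀ p ∈ chyStates m,
      gV m (fun u => y₀ u + t * d u) p.2 - gV m (fun u => y₀ u + t * d u) p.1
        = A p + t * B p := by
    intro t p hp
    obtain ⟨h1, h2, h3, h4⟩ := mem_chyStates.mp hp
    rw [gV_add_smul hm y₀ d t (show 2 ≤ p.2 by omega) h3, gV_add_smul hm y₀ d t h1 (by omega)]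
    simp only [hAdef, hBdef]
    ring
  have hc0 : (fun u => y₀ u + (0 : ℝ) * d u) = y₀ := by funext u; ring
  have hnz0 : ∀ p ∈ chyStates m, A p + (0 : ℝ) * B p ≠ 0 := by
    intro p hp
    have := Reg_nonvanish hm hy₀ p hp
    simp only [hAdef]
    intro h; apply this; linarith [h]
  have hφd := hasDerivAt_logsum hm s A B 0 hnz0
  have hφmax : IsLocalMax (fun t : ℝ => ∑ p ∈ chyStates m, s p * Real.log (A p + t * B p)) 0 := by
    have hcont : Continuous (fun t : ℝ => (fun u => y₀ u + t * d u)) := by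
      exact continuous_pi fun u => continuous_const.add (continuous_id.mul continuous_const)
    have hten : Filter.Tendsto (fun t : ℝ => (fun u => y₀ u + t * d u)) (nhds 0) (nhds y₀) := by
      have := hcont.continuousAt (x := (0 : ℝ))
      rwa [ContinuousAt, hc0] at this
    have hev := hten.eventually hLmax
    have hLf : ∀ t : ℝ, L (fun u => y₀ u + t * d u)
        = ∑ p ∈ chyStates m, s p * Real.log (A p + t * B p) := by
      intro t
      exact Finset.sum_congr rfl fun p hp => by rw [hrw t p hp]
    have h0' : (∑ p ∈ chyStates m, s p * Real.log (A p + (0 : ℝ) * B p)) = L y₀ := by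
      rw [← hLf 0, hc0]
    have goal : ∀ᶠ t in nhds (0 : ℝ),
        (∑ p ∈ chyStates m, s p * Real.log (A p + t * B p))
          ≤ ∑ p ∈ chyStates m, s p * Real.log (A p + (0 : ℝ) * B p) := by
      rw [h0']
      filter_upwards [hev] with t ht
      rw [← hLf t]
      exact ht
    exact goal
  have hzero := hφmax.hasDerivAt_eq_zero hφd
  rw [← hzero]
  refine Finset.sum_congr rfl fun p hp => ?_
  have hBp : B p = gD p (k : ℕ) := by
    rw [hBdef]
    simp only
    rw [gW_diff_eq_sum hm d hp]
    rw [Finset.sum_eq_single k]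
    · simp [hddef]
    · intro l _ hlk
      simp [hddef, Pi.single_apply, hlk]
    · intro h; exact absurd (Finset.mem_univ k) h
  rw [hBp]
  simp only [hAdef]
  rw [mul_div_assoc]
  norm_num

lemma unique_sol_in_Reg (hm : 4 ≤ m) (s : ℕ × ℕ → ℝ) (hs : ∀ p ∈ chyStates m, 0 < s p)
    (π : Equiv.Perm (Fin (m - 3))) {y z : Fin (m - 3) → ℝ}
    (hy : y ∈ Reg m π) (hz : z ∈ Reg m π)
    (hey : ∀ k : Fin (m - 3),
      ∑ p ∈ chyStates m, s p * gD p (k : ℕ) / (gV m y p.2 - gV m y p.1) = 0)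
    (hez : ∀ k : Fin (m - 3),
      ∑ p ∈ chyStates m, s p * gD p (k : ℕ) / (gV m z p.2 - gV m z p.1) = 0) :
    y = z := by
  classical
  by_contra hne
  set d : Fin (m - 3) → ℝ := fun u => z u - y u with hddef
  have hdne : ∃ k, d k ≠ 0 := by
    by_contra hall
    push_neg at hall
    exact hne (funext fun u => by have := hall u; simp [hddef] at this; linarith)
  obtain ⟨k₀, hk₀⟩ := hdne
  set A : ℕ × ℕ → ℝ := fun p => gV m y p.2 - gV m y p.1 with hAdef
  set B : ℕ × ℕ → ℝ := fun p => gW m d p.2 - gW m d p.1 with hBdef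
  have hrw : ∀ t : ℝ, ∀ p ∈ chyStates m,
      gV m (fun u => y u + t * d u) p.2 - gV m (fun u => y u + t * d u) p.1
        = A p + t * B p := by
    intro t p hp
    obtain ⟨h1, h2, h3, h4⟩ := mem_chyStates.mp hp
    rw [gV_add_smul hm y d t (show 2 ≤ p.2 by omega) h3, gV_add_smul hm y d t h1 (by omega)]
    simp only [hAdef, hBdef]
    ring
  have hseg : ∀ t : ℝ, 0 ≤ t → t ≤ 1 → (fun u => y u + t * d u) ∈ Reg m π := by
    intro t ht0 ht1
    exact Reg_segment hy hz ht0 ht1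
  have hnz : ∀ t : ℝ, 0 ≤ t → t ≤ 1 → ∀ p ∈ chyStates m, A p + t * B p ≠ 0 := by
    intro t ht0 ht1 p hp
    rw [← hrw t p hp]
    exact Reg_nonvanish hm (hseg t ht0 ht1) p hp
  set ψ : ℝ → ℝ := fun t => ∑ p ∈ chyStates m, (s p * B p) * (A p + t * B p)⁻¹ with hψdef
  -- ψ(0) = 0 and ψ(1) = 0
  have hsum_eq : ∀ (w : Fin (m - 3) → ℝ),
      (∀ k : Fin (m - 3),
        ∑ p ∈ chyStates m, s p * gD p (k : ℕ) / (gV m w p.2 - gV m w p.1) = 0) →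
      ∑ p ∈ chyStates m, (s p * B p) * (gV m w p.2 - gV m w p.1)⁻¹ = 0 := by
    intro w hw
    have hstep : ∑ p ∈ chyStates m, (s p * B p) * (gV m w p.2 - gV m w p.1)⁻¹
        = ∑ k : Fin (m - 3), d k *
            (∑ p ∈ chyStates m, s p * gD p (k : ℕ) / (gV m w p.2 - gV m w p.1)) := by
      have h1 : ∑ p ∈ chyStates m, (s p * B p) * (gV m w p.2 - gV m w p.1)⁻¹
          = ∑ p ∈ chyStates m, ∑ k : Fin (m - 3),
              d k * (s p * gD p (k : ℕ) / (gV m w p.2 - gV m w p.1)) := by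
        refine Finset.sum_congr rfl fun p hp => ?_
        simp only [hBdef]
        rw [gW_diff_eq_sum hm d hp, Finset.mul_sum, Finset.sum_mul]
        exact Finset.sum_congr rfl fun k _ => by rw [div_eq_mul_inv]; ring
      rw [h1, Finset.sum_comm]
      exact Finset.sum_congr rfl fun k _ => (Finset.mul_sum _ _ _).symm
    rw [hstep]
    refine Finset.sum_eq_zero fun k _ => ?_
    rw [hw k, mul_zero]
  have hψ0 : ψ 0 = 0 := by
    have h0 : ψ 0 = ∑ p ∈ chyStates m, (s p * B p) * (gV m y p.2 - gV m y p.1)⁻¹ := by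
      refine Finset.sum_congr rfl fun p _ => ?_
      simp only [hAdef]
      norm_num
    rw [h0]
    exact hsum_eq y hey
  have hz1 : (fun u => y u + 1 * d u) = z := funext fun u => by simp [hddef]
  have hψ1 : ψ 1 = 0 := by
    have h0 : ψ 1 = ∑ p ∈ chyStates m, (s p * B p) * (gV m z p.2 - gV m z p.1)⁻¹ := by
      refine Finset.sum_congr rfl fun p hp => ?_
      rw [← hrw 1 p hp, hz1]
    rw [h0]
    exact hsum_eq z hez
  have hanti : StrictAntiOn ψ (Set.Icc (0 : ℝ) 1) := by
    apply strictAntiOn_of_deriv_neg (convex_Icc 0 1)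
    · exact fun t ht =>
        ((hasDerivAt_psi s A B t (hnz t ht.1 ht.2)).continuousAt).continuousWithinAt
    · intro t ht
      rw [interior_Icc] at ht
      have hd := hasDerivAt_psi s A B t (hnz t ht.1.le ht.2.le)
      rw [hd.deriv]
      have hlt : ∑ p ∈ chyStates m, (s p * B p) * (-(B p) / (A p + t * B p) ^ 2)
          < ∑ _p ∈ chyStates m, (0 : ℝ) := by
        have hp₀mem : (2, (k₀ : ℕ) + 3) ∈ chyStates m := by
          have := k₀.isLt
          rw [mem_chyStates]; simp; omega
        refine Finset.sum_lt_sum ?_ ⟨(2, (k₀ : ℕ) + 3), hp₀mem, ?_⟩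
        · intro p hp
          have hD : (0 : ℝ) ≤ (A p + t * B p) ^ 2 := sq_nonneg _
          rw [show (s p * B p) * (-(B p) / (A p + t * B p) ^ 2)
              = -((s p * B p ^ 2) / (A p + t * B p) ^ 2) by ring]
          exact neg_nonpos_of_nonneg (div_nonneg
            (mul_nonneg (le_of_lt (hs p hp)) (sq_nonneg _)) hD)
        · have hB₀ : B (2, (k₀ : ℕ) + 3) = d k₀ := by
            show gW m d ((k₀ : ℕ) + 3) - gW m d 2 = d k₀
            rw [gW_coord hm, show gW m d 2 = 0 by simp [gW]]
            ring
          have hDne := hnz t ht.1.le ht.2.le _ hp₀mem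
          have hDpos : 0 < (A (2, (k₀ : ℕ) + 3) + t * B (2, (k₀ : ℕ) + 3)) ^ 2 :=
            pow_two_pos_of_ne_zero hDne
          rw [show (s (2, (k₀ : ℕ) + 3) * B (2, (k₀ : ℕ) + 3)) *
              (-(B (2, (k₀ : ℕ) + 3)) / (A (2, (k₀ : ℕ) + 3) + t * B (2, (k₀ : ℕ) + 3)) ^ 2)
              = -((s (2, (k₀ : ℕ) + 3) * B (2, (k₀ : ℕ) + 3) ^ 2)
                / (A (2, (k₀ : ℕ) + 3) + t * B (2, (k₀ : ℕ) + 3)) ^ 2) by ring]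
          have hBpos : 0 < B (2, (k₀ : ℕ) + 3) ^ 2 := by
            rw [hB₀]; exact pow_two_pos_of_ne_zero hk₀
          have hpos := div_pos (mul_pos (hs _ hp₀mem) hBpos) hDpos
          linarith
      rw [Finset.sum_const, smul_zero] at hlt
      exact hlt
  have h01 : ψ 1 < ψ 0 := hanti (Set.mem_Icc.mpr ⟨le_refl 0, zero_le_one⟩)
    (Set.mem_Icc.mpr ⟨zero_le_one, le_refl 1⟩) zero_lt_one
  rw [hψ0, hψ1] at h01
  exact lt_irrefl 0 h01


lemma perm_unique (hm : 4 ≤ m) {π π' : Equiv.Perm (Fin (m - 3))} {y : Fin (m - 3) → ℝ}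
    (hy : y ∈ Reg m π) (hy' : y ∈ Reg m π') : π = π' := by
  have hf : StrictMono fun k => y (π k) := fun a b hab => hy.2 a b hab
  have hg : StrictMono fun k => y (π' k) := fun a b hab => hy'.2 a b hab
  set σ : Equiv.Perm (Fin (m - 3)) := π'.trans π.symm with hσ
  have hcomp : ∀ k, y (π (σ k)) = y (π' k) := by intro k; simp [hσ]
  have hσmono : StrictMono fun k => σ k := by
    intro a b hab
    have h1 : y (π (σ a)) < y (π (σ b)) := by rw [hcomp, hcomp]; exact hg hab
    exact hf.lt_iff_lt.mp h1
  have hτmono : StrictMono fun k => σ.symm k := by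
    intro a b hab
    rcases lt_trichotomy (σ.symm a) (σ.symm b) with h | h | h
    · exact h
    · exact absurd (σ.symm.injective h) (ne_of_lt hab)
    · have := hσmono h
      simp only [Equiv.apply_symm_apply] at this
      exact absurd hab (not_lt.mpr (le_of_lt this))
  haveI : WellFoundedLT (Fin (m - 3)) := inferInstance
  have hσid : ∀ k, σ k = k := by
    intro k
    have hle : k ≤ σ k := StrictMono.le_apply hσmono
    have hge : σ k ≤ σ.symm (σ k) := StrictMono.le_apply hτmono
    rw [Equiv.symm_apply_apply] at hge
    exact le_antisymm hge hle
  refine Equiv.ext fun k => ?_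
  have h := congrArg π (hσid k)
  rw [hσ] at h
  simpa using h.symm

end CHY

/-- The CHY scattering equations have precisely `(m-3)!` solutions, all of them real,
with exactly one solution satisfying `0 < x_{π(1)} < ⋯ < x_{π(m-3)} < 1`
for each permutation `π`. -/
theorem stmt0 (m : ℕ) (hm : 4 ≤ m) (s : ℕ × ℕ → ℝ) (hs : ∀ p ∈ chyStates m, 0 < s p) :
    (chySol m s).Finite ∧
    (chySol m s).ncard = Nat.factorial (m - 3) ∧
    (∀ x ∈ chySol m s, ∀ k, (x k).im = 0) ∧
    ∀ π : Equiv.Perm (Fin (m - 3)), ∃! y : Fin (m - 3) → ℝ,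
      (fun k => (y k : ℂ)) ∈ chySol m s ∧
      (∀ k, 0 < y (π k) ∧ y (π k) < 1) ∧
      ∀ k l : Fin (m - 3), k < l → y (π k) < y (π l) := by
  classical
  have hex : ∀ π : Equiv.Perm (Fin (m - 3)), ∃ y, y ∈ CHY.Reg m π ∧
      (fun k => ((y k : ℝ) : ℂ)) ∈ chySol m s := by
    intro π
    obtain ⟨y, hy, heq⟩ := CHY.exists_sol_in_Reg hm s hs π
    exact ⟨y, hy, (CHY.sol_iff_real hm s y).mpr ⟨CHY.Reg_nonvanish hm hy, heq⟩⟩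
  choose sol hsolReg hsolMem using hex
  set F : Equiv.Perm (Fin (m - 3)) → (Fin (m - 3) → ℂ) :=
    fun π => fun k => ((sol π k : ℝ) : ℂ) with hF
  have hrange : chySol m s = Set.range F := by
    ext x
    constructor
    · intro hx
      have him := CHY.im_zero hm s hs hx
      set y : Fin (m - 3) → ℝ := fun k => (x k).re with hy
      have hxy : x = fun k => ((y k : ℝ) : ℂ) := by
        funext k
        apply Complex.ext
        · simp [hy]
        · simp [hy, him k]
      rw [hxy] at hx
      obtain ⟨hnz, heqs⟩ := (CHY.sol_iff_real hm s y).mp hx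
      have hIoo := CHY.real_sol_Ioo hm s hs y hnz heqs
      have hyinj : Function.Injective y := by
        intro a b hab
        by_contra hne
        exact CHY.apply_ne hm hnz hne hab
      set π := Tuple.sort y with hπ
      have hmono : StrictMono (y ∘ π) :=
        (Tuple.monotone_sort y).strictMono_of_injective (hyinj.comp π.injective)
      have hyReg : y ∈ CHY.Reg m π := ⟨fun k => hIoo (π k), fun k l h => hmono h⟩
      have hysol : y = sol π := CHY.unique_sol_in_Reg hm s hs π hyReg (hsolReg π) heqs
        ((CHY.sol_iff_real hm s (sol π)).mp (hsolMem π)).2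
      refine ⟨π, ?_⟩
      funext k
      show ((sol π k : ℝ) : ℂ) = x k
      rw [← hysol, hxy]
    · rintro ⟨π, rfl⟩
      exact hsolMem π
  have hFinj : Function.Injective F := by
    intro π π' h
    have hsols : sol π = sol π' := by
      funext k
      have := congrArg (fun f => f k) h
      simp only [hF] at this
      exact_mod_cast this
    exact CHY.perm_unique hm (hsols ▸ hsolReg π) (hsolReg π')
  refine ⟨?_, ?_, ?_, ?_⟩
  · rw [hrange]; exact Set.finite_range F
  · rw [hrange, ← Set.image_univ, Set.ncard_image_of_injective _ hFinj, Set.ncard_univ,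
      Nat.card_eq_fintype_card, Fintype.card_perm, Fintype.card_fin]
  · intro x hx k
    exact CHY.im_zero hm s hs hx k
  · intro π
    refine ⟨sol π, ⟨hsolMem π, (hsolReg π).1, (hsolReg π).2⟩, ?_⟩
    intro y' hy'
    obtain ⟨hmem', hcond1, hcond2⟩ := hy'
    have hy'Reg : y' ∈ CHY.Reg m π := ⟨hcond1, hcond2⟩
    obtain ⟨hnz', heqs'⟩ := (CHY.sol_iff_real hm s y').mp hmem'
    exact CHY.unique_sol_in_Reg hm s hs π hy'Reg (hsolReg π) heqs'
      ((CHY.sol_iff_real hm s (sol π)).mp (hsolMem π)).2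

end
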